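/- Let ξ₁,...,ξₙ be independent centered random variables with ξᵢ ≤ B almost surely for some B > 0, and let σ² = ∑ᵢ E[ξᵢ²]. Define b_i(λ) = E[ξᵢ e^{λξᵢ}]/E[e^{λξᵢ}] and B_n(λ) = ∑ᵢ b_i(λ). Then for all λ ≥ 0, B_n(λ) ≤ σ² (e^{Bλ} − 1)/B. -/

import Mathlib

open MeasureTheory ProbabilityTheory Real

lemma key_nonneg (l x : ℝ) (hl : 0 ≤ l) : 0 ≤ x * (Real.exp (l * x) - 1) := by
  rcases le_or_gt 0 x with h | h
  · have : (1 : ℝ) ≤ Real.exp (l * x) := Real.one_le_exp (by positivity)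
    nlinarith
  · have : Real.exp (l * x) ≤ 1 := by
      rw [Real.exp_le_one_iff]
      nlinarith
    nlinarith

lemma key_ineq (l B x : ℝ) (hl : 0 ≤ l) (hB : 0 < B) (hx : x ≤ B) :
    x * (Real.exp (l * x) - 1) ≤ x ^ 2 * ((Real.exp (B * l) - 1) / B) := by
  have hBl : B * l ≤ Real.exp (B * l) - 1 := by
    linarith [Real.add_one_le_exp (B * l)]
  rcases lt_trichotomy x 0 with h | h | h
  · have h1 : l * x + 1 ≤ Real.exp (l * x) := Real.add_one_le_exp (l * x)
    have h2 : x * (Real.exp (l * x) - 1) ≤ x * (l * x) := by nlinarith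
    have h3 : x * (l * x) = l * x ^ 2 := by ring
    have h4 : l * x ^ 2 ≤ x ^ 2 * ((Real.exp (B * l) - 1) / B) := by
      have hlc : l ≤ (Real.exp (B * l) - 1) / B := (le_div_iff₀ hB).2 (by linarith [mul_comm B l])
      nlinarith [sq_nonneg x]
    linarith
  · simp [h]
  · -- convexity of exp: exp(l*x) ≤ (1 - x/B) + (x/B) * exp(B*l)
    have ha : (0:ℝ) ≤ 1 - x / B := by
      have := (div_le_one hB).2 hx; linarith
    have hb : (0:ℝ) ≤ x / B := by positivity
    have hab : (1 - x / B) + x / B = 1 := by ring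
    have hc := convexOn_exp.2 (Set.mem_univ (0:ℝ)) (Set.mem_univ (B * l)) ha hb hab
    simp only [smul_eq_mul, mul_zero, zero_add, Real.exp_zero, mul_one] at hc
    have harg : x / B * (B * l) = l * x := by field_simp
    rw [harg] at hc
    have h5 : Real.exp (l * x) - 1 ≤ x / B * (Real.exp (B * l) - 1) := by nlinarith
    have h6 : x * (Real.exp (l * x) - 1) ≤ x * (x / B * (Real.exp (B * l) - 1)) :=
      mul_le_mul_of_nonneg_left h5 h.le
    calc x * (Real.exp (l * x) - 1) ≤ x * (x / B * (Real.exp (B * l) - 1)) := h6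
      _ = x ^ 2 * ((Real.exp (B * l) - 1) / B) := by ring

/-- Upper bound on the tilted mean `B_n(λ)` for sums of independent centered
random variables bounded above by `B`. -/
theorem tilted_mean_upper_bound {Ω : Type*} [MeasurableSpace Ω] (μ : Measure Ω)
    [IsProbabilityMeasure μ] (n : ℕ) (ξ : Fin n → Ω → ℝ) (B : ℝ) (hB : 0 < B)
    (hmeas : ∀ i, Measurable (ξ i))
    (hindep : iIndepFun ξ μ)
    (hint : ∀ i, Integrable (ξ i) μ) (hmean : ∀ i, ∫ ω, ξ i ω ∂μ = 0)
    (hbdd : ∀ i, ∀ᵐ ω ∂μ, ξ i ω ≤ B)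
    (hint2 : ∀ i, Integrable (fun ω => (ξ i ω) ^ 2) μ)
    (hinte : ∀ i, ∀ l : ℝ, 0 ≤ l → Integrable (fun ω => Real.exp (l * ξ i ω)) μ)
    (hintxe : ∀ i, ∀ l : ℝ, 0 ≤ l →
      Integrable (fun ω => ξ i ω * Real.exp (l * ξ i ω)) μ) :
    ∀ l : ℝ, 0 ≤ l →
      ∑ i, (∫ ω, ξ i ω * Real.exp (l * ξ i ω) ∂μ) / (∫ ω, Real.exp (l * ξ i ω) ∂μ)
        ≤ (∑ i, ∫ ω, (ξ i ω) ^ 2 ∂μ) * (Real.exp (B * l) - 1) / B := by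
  intro l hl
  set c : ℝ := (Real.exp (B * l) - 1) / B with hc
  have hc0 : 0 ≤ c := by
    have : B * l ≤ Real.exp (B * l) - 1 := by linarith [Real.add_one_le_exp (B * l)]
    have : 0 ≤ Real.exp (B * l) - 1 := by nlinarith
    positivity
  have key : ∀ i : Fin n,
      (∫ ω, ξ i ω * Real.exp (l * ξ i ω) ∂μ) / (∫ ω, Real.exp (l * ξ i ω) ∂μ)
        ≤ (∫ ω, (ξ i ω) ^ 2 ∂μ) * c := by
    intro i
    set N : ℝ := ∫ ω, ξ i ω * Real.exp (l * ξ i ω) ∂μ with hN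
    set D : ℝ := ∫ ω, Real.exp (l * ξ i ω) ∂μ with hD
    -- D ≥ 1
    have hD1 : (1 : ℝ) ≤ D := by
      have hi1 : Integrable (fun ω => 1 + l * ξ i ω) μ :=
        (integrable_const 1).add ((hint i).const_mul l)
      have hle : (fun ω => 1 + l * ξ i ω) ≤ᵐ[μ] (fun ω => Real.exp (l * ξ i ω)) := by
        filter_upwards with ω using by linarith [Real.add_one_le_exp (l * ξ i ω)]
      have := integral_mono_ae hi1 (hinte i l hl) hle
      rwa [integral_add (integrable_const 1) ((hint i).const_mul l),
        integral_const, integral_const_mul, hmean i, mul_zero, add_zero,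
        probReal_univ, smul_eq_mul, one_mul] at this
    -- N = ∫ ξ (e^{lξ} - 1)
    have hNeq : N = ∫ ω, ξ i ω * (Real.exp (l * ξ i ω) - 1) ∂μ := by
      have : ∀ ω, ξ i ω * (Real.exp (l * ξ i ω) - 1)
          = ξ i ω * Real.exp (l * ξ i ω) - ξ i ω := fun ω => by ring
      simp only [this]
      rw [integral_sub (hintxe i l hl) (hint i), hmean i, sub_zero]
    have hint3 : Integrable (fun ω => ξ i ω * (Real.exp (l * ξ i ω) - 1)) μ := by
      have : (fun ω => ξ i ω * (Real.exp (l * ξ i ω) - 1))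
          = fun ω => ξ i ω * Real.exp (l * ξ i ω) - ξ i ω := by
        funext ω; ring
      rw [this]; exact (hintxe i l hl).sub (hint i)
    have hNnn : 0 ≤ N := by
      rw [hNeq]
      exact integral_nonneg fun ω => key_nonneg l (ξ i ω) hl
    have hstep1 : N / D ≤ N := div_le_self hNnn hD1
    have hstep2 : N ≤ (∫ ω, (ξ i ω) ^ 2 ∂μ) * c := by
      rw [hNeq, ← integral_mul_const]
      refine integral_mono_ae hint3 ((hint2 i).mul_const c) ?_
      filter_upwards [hbdd i] with ω hω
      exact key_ineq l B (ξ i ω) hl hB hω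
    linarith
  calc ∑ i, (∫ ω, ξ i ω * Real.exp (l * ξ i ω) ∂μ) / (∫ ω, Real.exp (l * ξ i ω) ∂μ)
      ≤ ∑ i, (∫ ω, (ξ i ω) ^ 2 ∂μ) * c := Finset.sum_le_sum fun i _ => key i
    _ = (∑ i, ∫ ω, (ξ i ω) ^ 2 ∂μ) * (Real.exp (B * l) - 1) / B := by
        rw [← Finset.sum_mul, hc]; ring
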